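/- Let L be slowly varying at the origin, α ∈ ℝ, x₀ ∈ ℝ, and let f be a tempered distribution which has quasiasymptotic behavior of degree α at x₀ with respect to L with limit g ∈ S'(ℝ). Then g is homogeneous of degree α, i.e., for every a > 0 and every ψ ∈ S(ℝ), a⁻¹⟨g, ψ(·/a)⟩ = a^α ⟨g, ψ⟩. -/

import Mathlib

open MeasureTheory Filter SchwartzMap
open scoped Real Topology ComplexConjugate SchwartzMap

noncomputable section

/-- An affine function `x ↦ a * x + b` has temperate growth. -/
lemma hasTemperateGrowth_of_affine {g : ℝ → ℝ} (a b : ℝ) (hg : ∀ x, g x = a * x + b) :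
    Function.HasTemperateGrowth g := by
  rw [show g = fun x => a * x + b from funext hg]
  apply Function.HasTemperateGrowth.of_fderiv (k := 1) (C := |a| + |b|)
  · have h : (fderiv ℝ fun x : ℝ => a * x + b) = fun _ : ℝ =>
        (a • (1 : ℝ →L[ℝ] ℝ)) := by
      funext x
      have h1 : HasFDerivAt (fun x : ℝ => a * x + b) (a • (1 : ℝ →L[ℝ] ℝ)) x := by
        simpa [ContinuousLinearMap.one_def] using ((hasFDerivAt_id x).const_mul a).add_const b
      exact h1.fderiv
    rw [h]
    exact Function.HasTemperateGrowth.const _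
  · exact (differentiable_id.const_mul a).add_const b
  · intro x
    have : ‖a * x + b‖ ≤ |a| * |x| + |b| := by
      rw [Real.norm_eq_abs]
      calc |a * x + b| ≤ |a * x| + |b| := abs_add_le _ _
      _ = |a| * |x| + |b| := by rw [abs_mul]
    refine this.trans ?_
    have hx : |x| = ‖x‖ := rfl
    nlinarith [abs_nonneg a, abs_nonneg b, norm_nonneg x, abs_nonneg x]

lemma upper_of_affine {g : ℝ → ℝ} (a b : ℝ) (ha : a ≠ 0) (hg : ∀ x, g x = a * x + b) :
    ∃ (k : ℕ) (C : ℝ), ∀ x : ℝ, ‖x‖ ≤ C * (1 + ‖g x‖) ^ k := by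
  refine ⟨1, (1 + |b|) / |a|, fun x => ?_⟩
  have ha' : (0:ℝ) < |a| := abs_pos.mpr ha
  rw [hg x, pow_one, div_mul_eq_mul_div, le_div_iff₀ ha', Real.norm_eq_abs, Real.norm_eq_abs]
  have h1 : |a * x| ≤ |a * x + b| + |b| := by
    calc |a * x| = |(a * x + b) - b| := by ring_nf
    _ ≤ |a * x + b| + |b| := abs_sub _ _
  rw [abs_mul] at h1
  nlinarith [abs_nonneg (a * x + b), abs_nonneg b, abs_nonneg x]

/-- The Schwartz function `x ↦ ψ ((x - x₀) / ε)`, for `ε ≠ 0`. -/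
def SchwartzMap.dilShift (x₀ ε : ℝ) (hε : ε ≠ 0) (ψ : 𝓢(ℝ, ℂ)) : 𝓢(ℝ, ℂ) :=
  SchwartzMap.compCLM (𝕜 := ℝ) (g := fun x : ℝ => (x - x₀) / ε)
    (hasTemperateGrowth_of_affine ε⁻¹ (-(x₀ / ε)) (fun x => by field_simp; ring))
    (upper_of_affine ε⁻¹ (-(x₀ / ε)) (inv_ne_zero hε) (fun x => by field_simp; ring)) ψ

/-- The pairing `⟨f(x₀ + ε ·), ψ⟩ = ε⁻¹ ⟨f, ψ((· - x₀)/ε)⟩` (junk value `0` if `ε = 0`). -/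
def pairScale (f : 𝓢(ℝ, ℂ) → ℂ) (x₀ ε : ℝ) (ψ : 𝓢(ℝ, ℂ)) : ℂ :=
  if hε : ε = 0 then 0 else (ε : ℂ)⁻¹ * f (SchwartzMap.dilShift x₀ ε hε ψ)

/-- Complex conjugation of a Schwartz function. -/
def SchwartzMap.conjSM (ψ : 𝓢(ℝ, ℂ)) : 𝓢(ℝ, ℂ) where
  toFun := fun x => conj (ψ x)
  smooth' := Complex.conjLIE.contDiff.comp ψ.smooth'
  decay' := by
    intro k n
    obtain ⟨C, hC⟩ := ψ.decay' k n
    refine ⟨C, fun x => ?_⟩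
    have h : ‖iteratedFDeriv ℝ n (fun y => Complex.conjLIE (ψ y)) x‖
        = ‖iteratedFDeriv ℝ n (fun y => ψ y) x‖ :=
      Complex.conjLIE.norm_iteratedFDeriv_comp_left (fun y => ψ y) x n
    simpa [Complex.conjLIE_apply] using h ▸ hC x

/-- The wavelet family member `φ_{m,n}(x) = 2^(m/2) φ(2^m x - n)` as a Schwartz function. -/
def SchwartzMap.wavelet (φ : 𝓢(ℝ, ℂ)) (m n : ℤ) : 𝓢(ℝ, ℂ) :=
  (2 : ℝ) ^ ((m : ℝ) / 2) •
    SchwartzMap.compCLM (𝕜 := ℝ) (g := fun x : ℝ => (2 : ℝ) ^ m * x - (n : ℝ))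
      (hasTemperateGrowth_of_affine ((2:ℝ) ^ m) (-(n : ℝ)) (fun x => by ring))
      (upper_of_affine ((2:ℝ) ^ m) (-(n : ℝ)) (by positivity) (fun x => by ring)) φ

/-- `φ` is an orthonormal wavelet: the family `φ_{m,n}` is an orthonormal basis of `L²(ℝ)`. -/
def IsOrthonormalWavelet (φ : 𝓢(ℝ, ℂ)) : Prop :=
  (∀ m n m' n' : ℤ, ∫ x : ℝ, φ.wavelet m n x * conj (φ.wavelet m' n' x)
      = if m = m' ∧ n = n' then 1 else 0) ∧
  ∀ h : ℝ → ℂ, MemLp h 2 volume →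
    (∀ m n : ℤ, ∫ x : ℝ, h x * conj (φ.wavelet m n x) = 0) → h =ᵐ[volume] 0

/-- Membership in `S₀(ℝ)`: all moments vanish. -/
def IsS0 (ψ : 𝓢(ℝ, ℂ)) : Prop := ∀ n : ℕ, ∫ x : ℝ, (x : ℂ) ^ n * ψ x = 0

/-- A measurable function positive near `0⁺` slowly varying at the origin. -/
def SlowlyVaryingAtZero (L : ℝ → ℝ) : Prop :=
  Measurable L ∧ (∃ A > (0:ℝ), ∀ x : ℝ, 0 < x → x ≤ A → 0 < L x) ∧
    ∀ a > (0:ℝ), Tendsto (fun ε => L (a * ε) / L ε) (𝓝[>] 0) (𝓝 1)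

/-- A measurable function positive near `∞` slowly varying at infinity. -/
def SlowlyVaryingAtInfty (L : ℝ → ℝ) : Prop :=
  Measurable L ∧ (∃ A > (0:ℝ), ∀ x : ℝ, A ≤ x → 0 < L x) ∧
    ∀ a > (0:ℝ), Tendsto (fun lam => L (a * lam) / L lam) atTop (𝓝 1)

/-- The wavelet coefficient `c_{m,n}^φ(f; ε, x₀) = ⟨f(x₀+ε·), conj(φ_{m,n})⟩`. -/
def waveletCoeff (φ : 𝓢(ℝ, ℂ)) (f : 𝓢(ℝ, ℂ) → ℂ) (ε x₀ : ℝ) (m n : ℤ) : ℂ :=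
  pairScale f x₀ ε (φ.wavelet m n).conjSM


lemma dilShift_apply (x₀ ε : ℝ) (hε : ε ≠ 0) (ψ : 𝓢(ℝ, ℂ)) (x : ℝ) :
    SchwartzMap.dilShift x₀ ε hε ψ x = ψ ((x - x₀) / ε) := rfl

lemma dilShift_comp (x₀ ε a : ℝ) (hε : ε ≠ 0) (ha : a ≠ 0) (ψ : 𝓢(ℝ, ℂ)) :
    SchwartzMap.dilShift x₀ ε hε (SchwartzMap.dilShift 0 a ha ψ)
      = SchwartzMap.dilShift x₀ (a * ε) (mul_ne_zero ha hε) ψ := by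
  ext x
  show ψ (((x - x₀) / ε - 0) / a) = ψ ((x - x₀) / (a * ε))
  congr 1
  rw [sub_zero, div_div, mul_comm]

/-- If a tempered distribution `f` has quasiasymptotic behavior of degree `α`
at `x₀` with respect to `L` with limit `g ∈ S'(ℝ)`, then `g` is homogeneous of degree `α`:
`a⁻¹⟨g, ψ(·/a)⟩ = a^α ⟨g, ψ⟩` for every `a > 0` and every Schwartz `ψ`. -/
theorem homogeneity_of_quasiasymptotic_limit
    (L : ℝ → ℝ) (hL : SlowlyVaryingAtZero L) (α x₀ : ℝ)
    (f g : 𝓢(ℝ, ℂ) →L[ℂ] ℂ)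
    (hfg : ∀ ψ : 𝓢(ℝ, ℂ),
      Tendsto (fun ε : ℝ => pairScale (⇑f) x₀ ε ψ / ((ε ^ α * L ε : ℝ) : ℂ))
        (𝓝[>] 0) (𝓝 (g ψ))) :
    ∀ a : ℝ, 0 < a → ∀ ψ : 𝓢(ℝ, ℂ),
      pairScale (⇑g) 0 a ψ = ((a ^ α : ℝ) : ℂ) * g ψ := by
  intro a ha ψ
  obtain ⟨-, ⟨A, hA, hApos⟩, hLslow⟩ := hL
  set Ψ := SchwartzMap.dilShift 0 a ha.ne' ψ with hΨ
  have h1 := hfg Ψ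
  -- the scaling map ε ↦ a * ε preserves 𝓝[>] 0
  have hmul : Tendsto (fun ε : ℝ => a * ε) (𝓝[>] (0:ℝ)) (𝓝[>] (0:ℝ)) := by
    apply tendsto_nhdsWithin_of_tendsto_nhds_of_eventually_within
    · have : Tendsto (fun ε : ℝ => a * ε) (𝓝 (0:ℝ)) (𝓝 (a * 0)) :=
        (continuous_const.mul continuous_id).tendsto 0
      simpa using this.mono_left nhdsWithin_le_nhds
    · filter_upwards [self_mem_nhdsWithin] with ε hε
      exact mul_pos ha hε
  have h3 : Tendsto (fun ε : ℝ =>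
      pairScale (⇑f) x₀ (a * ε) ψ / (((a * ε) ^ α * L (a * ε) : ℝ) : ℂ))
      (𝓝[>] (0:ℝ)) (𝓝 (g ψ)) := (hfg ψ).comp hmul
  -- ratio of the regularly varying normalizations
  have h4 : Tendsto (fun ε : ℝ =>
      (((a * ε) ^ α * L (a * ε)) / (ε ^ α * L ε) : ℝ)) (𝓝[>] (0:ℝ)) (𝓝 (a ^ α)) := by
    have h0 : Tendsto (fun ε : ℝ => a ^ α * (L (a * ε) / L ε)) (𝓝[>] (0:ℝ))
        (𝓝 (a ^ α * 1)) := (hLslow a ha).const_mul _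
    rw [mul_one] at h0
    refine h0.congr' ?_
    filter_upwards [self_mem_nhdsWithin] with ε hε
    have hε : (0:ℝ) < ε := hε
    have hεα : ε ^ α ≠ 0 := (Real.rpow_pos_of_pos hε α).ne'
    rw [Real.mul_rpow ha.le hε.le, mul_assoc, mul_div_assoc, mul_div_mul_left _ _ hεα]
  have h4c : Tendsto (fun ε : ℝ =>
      ((((a * ε) ^ α * L (a * ε)) / (ε ^ α * L ε) : ℝ) : ℂ)) (𝓝[>] (0:ℝ))
      (𝓝 ((a ^ α : ℝ) : ℂ)) := (Complex.continuous_ofReal.tendsto _).comp h4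
  have h5 : Tendsto (fun ε : ℝ =>
      (a : ℂ) * (pairScale (⇑f) x₀ (a * ε) ψ / (((a * ε) ^ α * L (a * ε) : ℝ) : ℂ)) *
        ((((a * ε) ^ α * L (a * ε)) / (ε ^ α * L ε) : ℝ) : ℂ))
      (𝓝[>] (0:ℝ)) (𝓝 ((a : ℂ) * g ψ * ((a ^ α : ℝ) : ℂ))) :=
    ((tendsto_const_nhds.mul h3).mul h4c)
  -- eventual equality between the two expressions
  have hev : ∀ᶠ ε in 𝓝[>] (0:ℝ),
      (a : ℂ) * (pairScale (⇑f) x₀ (a * ε) ψ / (((a * ε) ^ α * L (a * ε) : ℝ) : ℂ)) *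
        ((((a * ε) ^ α * L (a * ε)) / (ε ^ α * L ε) : ℝ) : ℂ)
      = pairScale (⇑f) x₀ ε Ψ / ((ε ^ α * L ε : ℝ) : ℂ) := by
    have hδ : (0:ℝ) < min A (A / a) := lt_min hA (div_pos hA ha)
    have hIoo : Set.Ioo (0:ℝ) (min A (A / a)) ∈ 𝓝[>] (0:ℝ) :=
      Ioo_mem_nhdsGT_of_mem (by simp [hδ])
    filter_upwards [hIoo] with ε hεm
    obtain ⟨hε, hεlt⟩ := hεm
    have hεA : ε ≤ A := le_of_lt (lt_of_lt_of_le hεlt (min_le_left _ _))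
    have haεA : a * ε ≤ A := by
      have : ε < A / a := lt_of_lt_of_le hεlt (min_le_right _ _)
      calc a * ε ≤ a * (A / a) := by nlinarith
        _ = A := by field_simp
    have hLε : 0 < L ε := hApos ε hε hεA
    have hLaε : 0 < L (a * ε) := hApos _ (mul_pos ha hε) haεA
    have hεα : (0:ℝ) < ε ^ α := Real.rpow_pos_of_pos hε α
    have haεα : (0:ℝ) < (a * ε) ^ α := Real.rpow_pos_of_pos (mul_pos ha hε) α
    have hne1 : ((ε ^ α * L ε : ℝ) : ℂ) ≠ 0 := by
      exact_mod_cast (mul_pos hεα hLε).ne'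
    have hne2 : (((a * ε) ^ α * L (a * ε) : ℝ) : ℂ) ≠ 0 := by
      exact_mod_cast (mul_pos haεα hLaε).ne'
    have hεne : ε ≠ 0 := hε.ne'
    have haεne : a * ε ≠ 0 := (mul_pos ha hε).ne'
    have hεc : (ε : ℂ) ≠ 0 := by exact_mod_cast hεne
    have hac : (a : ℂ) ≠ 0 := by exact_mod_cast ha.ne'
    have hkey : pairScale (⇑f) x₀ ε Ψ = (a : ℂ) * pairScale (⇑f) x₀ (a * ε) ψ := by
      rw [pairScale, pairScale, dif_neg hεne, dif_neg haεne, hΨ,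
        dilShift_comp x₀ ε a hεne ha.ne' ψ]
      push_cast
      field_simp
    have halg : ∀ x d d' : ℂ, d ≠ 0 → d' ≠ 0 →
        (a : ℂ) * (x / d') * (d' / d) = (a : ℂ) * x / d := by
      intro x d d' hd hd'
      field_simp
    rw [hkey, Complex.ofReal_div]
    exact halg _ _ _ hne1 hne2
  have h6 : Tendsto (fun ε : ℝ => pairScale (⇑f) x₀ ε Ψ / ((ε ^ α * L ε : ℝ) : ℂ))
      (𝓝[>] (0:ℝ)) (𝓝 ((a : ℂ) * g ψ * ((a ^ α : ℝ) : ℂ))) := h5.congr' hev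
  have huniq : g Ψ = (a : ℂ) * g ψ * ((a ^ α : ℝ) : ℂ) := tendsto_nhds_unique h1 h6
  rw [pairScale, dif_neg ha.ne', ← hΨ, huniq]
  have hac : (a : ℂ) ≠ 0 := by exact_mod_cast ha.ne'
  field_simp

end
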